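/- If t[x:=u] is strongly normalizing with respect to the union of the rules β, δ, γ, assoc, then t is strongly normalizing, and the length η(t) of the longest reduction from t is at most η(t[x:=u]). -/

import Mathlib

/-- Untyped λ-terms in de Bruijn representation. -/
inductive Term : Type
  | var : ℕ → Term
  | lam : Term → Term
  | app : Term → Term → Term
  deriving DecidableEq

namespace Term

/-- Shift (lift) all de Bruijn indices ≥ d by one. -/
def lift (d : ℕ) : Term → Term
  | var n => var (if n < d then n else n + 1)
  | lam t => lam (lift (d + 1) t)
  | app t u => app (lift d t) (lift d u)

/-- Capture-avoiding substitution `t[k := u]` (de Bruijn style). -/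
def subst : Term → ℕ → Term → Term
  | var n, k, u => if n = k then u else var (if n < k then n else n - 1)
  | lam t, k, u => lam (subst t (k + 1) (lift 0 u))
  | app t v, k, u => app (subst t k u) (subst v k u)

/-- Swap the de Bruijn indices d and d+1 (exchange of two adjacent binders). -/
def swap (d : ℕ) : Term → Term
  | var n => var (if n = d then d + 1 else if n = d + 1 then d else n)
  | lam t => lam (swap (d + 1) t)
  | app t u => app (swap d t) (swap d u)

end Term

/-- The four reduction rules. -/
inductive Rule | beta | delta | gamma | assoc

/-- One-step reduction by a given rule (closed under congruence).
β: (λx.M N) ▷ M[x:=N];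
δ: (λy.λx.M N) ▷ λx.(λy.M N), x ∉ FV(N);
γ: (λx.M N P) ▷ (λx.(M P) N), x ∉ FV(P);
assoc: (M (λx.N P)) ▷ (λx.(M N) P), x ∉ FV(M).
Freshness conditions are realized by lifting. -/
inductive Step : Rule → Term → Term → Prop
  | beta (M N) : Step .beta (.app (.lam M) N) (Term.subst M 0 N)
  | delta (M N) : Step .delta (.app (.lam (.lam M)) N)
      (.lam (.app (.lam (Term.swap 0 M)) (Term.lift 0 N)))
  | gamma (M N P) : Step .gamma (.app (.app (.lam M) N) P)
      (.app (.lam (.app M (Term.lift 0 P))) N)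
  | assoc (M N P) : Step .assoc (.app M (.app (.lam N) P))
      (.app (.lam (.app (Term.lift 0 M) N)) P)
  | appCongL {r t t'} (u) : Step r t t' → Step r (.app t u) (.app t' u)
  | appCongR {r u u'} (t) : Step r u u' → Step r (.app t u) (.app t u')
  | lamCong {r t t'} : Step r t t' → Step r (.lam t) (.lam t')

/-- One-step reduction by the union of the four rules. -/
def StepAll (t t' : Term) : Prop := ∃ r, Step r t t'

/-- Strong normalization for the union of β, δ, γ, assoc. -/
def SN (t : Term) : Prop := Acc (fun a b => StepAll b a) t

/-- Strong normalization for β alone. -/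
def SNbeta (t : Term) : Prop := Acc (fun a b => Step .beta b a) t

mutual
/-- Simple types: atoms and arrows with simple codomain. -/
inductive STy : Type
  | atom : ℕ → STy
  | arrow : Ty → STy → STy
/-- Types of system D: intersections of simple types. -/
inductive Ty : Type
  | simple : STy → Ty
  | inter : STy → Ty → Ty
end

/-- Typing judgment of system D (contexts are lists of types, de Bruijn). -/
inductive Typing : List Ty → Term → Ty → Prop
  | var {Γ n A} : Γ[n]? = some A → Typing Γ (.var n) A
  | app {Γ M N A B} : Typing Γ M (.simple (.arrow A B)) → Typing Γ N A →
      Typing Γ (.app M N) (.simple B)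
  | lam {Γ M A B} : Typing (A :: Γ) M (.simple B) →
      Typing Γ (.lam M) (.simple (.arrow A B))
  | interI {Γ M A B} : Typing Γ M (.simple A) → Typing Γ M B →
      Typing Γ M (.inter A B)
  | interE1 {Γ M A B} : Typing Γ M (.inter A B) → Typing Γ M (.simple A)
  | interE2 {Γ M A B} : Typing Γ M (.inter A B) → Typing Γ M B

/-- A term is typable in system D. -/
def Typable (t : Term) : Prop := ∃ Γ A, Typing Γ t A

/-- (H M₁ ... Mₙ). -/
def appList (H : Term) (Ms : List Term) : Term := Ms.foldl .app H

/-- Reduction sequences of a given length. -/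
inductive Chain : Term → ℕ → Prop
  | zero (t) : Chain t 0
  | succ {t t' n} : StepAll t t' → Chain t' n → Chain t (n + 1)

/-- η(t): the length of the longest reduction sequence from t. -/
noncomputable def eta (t : Term) : ℕ := sSup {n | Chain t n}

namespace Term

lemma lift_lift (t : Term) : ∀ i j, i ≤ j →
    lift i (lift j t) = lift (j + 1) (lift i t) := by
  induction t with
  | var n =>
      intro i j hij
      simp only [lift]
      split_ifs <;> (try simp only [lift]) <;> (try split_ifs) <;>
        first | rfl | (exfalso; omega) | (congr 1; omega)
  | lam t ih =>
      intro i j hij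
      simp only [lift, ih (i+1) (j+1) (by omega)]
  | app t u iht ihu =>
      intro i j hij
      simp only [lift, iht _ _ hij, ihu _ _ hij]

lemma subst_lift (t : Term) : ∀ k u, subst (lift k t) k u = t := by
  induction t with
  | var n =>
      intro k u
      simp only [lift, subst]
      split_ifs <;> (try simp only [lift, subst]) <;> (try split_ifs) <;>
        first | rfl | (exfalso; omega) | (congr 1; omega)
  | lam t ih => intro k u; simp only [lift, subst, ih]
  | app t v iht ihv => intro k u; simp only [lift, subst, iht, ihv]

lemma lift_subst (t : Term) : ∀ j k u, j ≤ k →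
    lift j (subst t k u) = subst (lift j t) (k + 1) (lift j u) := by
  induction t with
  | var n =>
      intro j k u h
      simp only [lift, subst]
      split_ifs <;> (try simp only [lift, subst]) <;> (try split_ifs) <;>
        first | rfl | (exfalso; omega) | (congr 1; omega)
  | lam t ih =>
      intro j k u h
      simp only [lift, subst, ih (j+1) (k+1) (Term.lift 0 u) (by omega)]
      rw [lift_lift u 0 j (by omega)]
  | app t v iht ihv =>
      intro j k u h
      simp only [lift, subst, iht _ _ _ h, ihv _ _ _ h]

lemma subst_subst (t : Term) : ∀ j k N u, j ≤ k →
    subst (subst t j N) k u = subst (subst t (k + 1) (lift j u)) j (subst N k u) := by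
  induction t with
  | var n =>
      intro j k N u h
      simp only [subst]
      split_ifs <;> (try simp only [subst]) <;> (try rw [subst_lift]) <;> (try split_ifs) <;>
        first | rfl | (exfalso; omega) | (congr 1; omega)
  | lam t ih =>
      intro j k N u h
      simp only [subst]
      rw [ih (j+1) (k+1) (lift 0 N) (lift 0 u) (by omega)]
      rw [lift_lift u 0 j (by omega)]
      rw [lift_subst N 0 k u (by omega)]
  | app t v iht ihv =>
      intro j k N u h
      simp only [subst, iht _ _ _ _ h, ihv _ _ _ _ h]

lemma swap_lift (t : Term) : ∀ j d, j ≤ d →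
    lift j (swap d t) = swap (d + 1) (lift j t) := by
  induction t with
  | var n =>
      intro j d h
      simp only [lift, swap]
      split_ifs <;> (try simp only [lift, swap]) <;> (try split_ifs) <;>
        first | rfl | (exfalso; omega) | (congr 1; omega)
  | lam t ih =>
      intro j d h
      simp only [lift, swap, ih (j+1) (d+1) (by omega)]
  | app t v iht ihv =>
      intro j d h
      simp only [lift, swap, iht _ _ h, ihv _ _ h]

lemma swap_lift_lift (u : Term) : ∀ d, swap d (lift d (lift d u)) = lift d (lift d u) := by
  induction u with
  | var n =>
      intro d
      simp only [lift, swap]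
      split_ifs <;> (try simp only [lift, swap]) <;> (try split_ifs) <;>
        first | rfl | (exfalso; omega) | (congr 1; omega)
  | lam t ih => intro d; simp only [lift, swap, ih]
  | app t v iht ihv => intro d; simp only [lift, swap, iht, ihv]

lemma swap_subst (t : Term) : ∀ d k u, d + 1 < k →
    swap d (subst t k u) = subst (swap d t) k (swap d u) := by
  induction t with
  | var n =>
      intro d k u h
      simp only [subst, swap]
      split_ifs <;> (try simp only [subst, swap]) <;> (try split_ifs) <;>
        first | rfl | (exfalso; omega) | (congr 1; omega)
  | lam t ih =>
      intro d k u h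
      simp only [subst, swap, ih (d+1) (k+1) (lift 0 u) (by omega)]
      rw [swap_lift u 0 d (by omega)]
  | app t v iht ihv =>
      intro d k u h
      simp only [subst, swap, iht _ _ _ h, ihv _ _ _ h]

end Term

lemma step_subst {r : Rule} {t t' : Term} (h : Step r t t') :
    ∀ k u, Step r (Term.subst t k u) (Term.subst t' k u) := by
  induction h with
  | beta M N =>
      intro k u
      rw [Term.subst_subst M 0 k N u (Nat.zero_le _)]
      exact Step.beta _ _
  | delta M N =>
      intro k u
      simp only [Term.subst]
      rw [show Term.subst (Term.swap 0 M) (k+1+1) (Term.lift 0 (Term.lift 0 u))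
            = Term.swap 0 (Term.subst M (k+1+1) (Term.lift 0 (Term.lift 0 u))) by
        rw [Term.swap_subst M 0 (k+1+1) _ (by omega), Term.swap_lift_lift]]
      rw [← Term.lift_subst N 0 k u (Nat.zero_le _)]
      exact Step.delta _ _
  | gamma M N P =>
      intro k u
      simp only [Term.subst]
      rw [← Term.lift_subst P 0 k u (Nat.zero_le _)]
      exact Step.gamma _ _ _
  | assoc M N P =>
      intro k u
      simp only [Term.subst]
      rw [← Term.lift_subst M 0 k u (Nat.zero_le _)]
      exact Step.assoc _ _ _
  | appCongL u' _ ih => intro k u; exact Step.appCongL _ (ih k u)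
  | appCongR t' _ ih => intro k u; exact Step.appCongR _ (ih k u)
  | lamCong _ ih => intro k u; exact Step.lamCong (ih (k+1) (Term.lift 0 u))

/-- All one-step reducts of a term (complete list). -/
def reducts : Term → List Term
  | .var _ => []
  | .lam t => (reducts t).map .lam
  | .app t u =>
      (match t with | .lam M => [Term.subst M 0 u] | _ => []) ++
      (match t with
        | .lam (.lam M) => [Term.lam (.app (.lam (Term.swap 0 M)) (Term.lift 0 u))]
        | _ => []) ++
      (match t with
        | .app (.lam M) N => [Term.app (.lam (.app M (Term.lift 0 u))) N]
        | _ => []) ++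
      (match u with
        | .app (.lam N) P => [Term.app (.lam (.app (Term.lift 0 t) N)) P]
        | _ => []) ++
      ((reducts t).map (fun t' => Term.app t' u)) ++
      ((reducts u).map (fun u' => Term.app t u'))

lemma reducts_complete {t t' : Term} (h : StepAll t t') : t' ∈ reducts t := by
  obtain ⟨r, h⟩ := h
  induction h with
  | beta M N => simp [reducts]
  | delta M N => simp [reducts]
  | gamma M N P => simp [reducts]
  | assoc M N P => simp [reducts]
  | appCongL u _ ih => simp [reducts]; tauto
  | appCongR t _ ih => simp [reducts]; tauto
  | lamCong _ ih => simp [reducts]; tauto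

lemma chain_subst {t : Term} {n : ℕ} (h : Chain t n) (k : ℕ) (u : Term) :
    Chain (Term.subst t k u) n := by
  induction h with
  | zero t => exact Chain.zero _
  | succ hst _ ih =>
      exact Chain.succ ⟨hst.choose, step_subst hst.choose_spec k u⟩ ih

lemma bound_of_sn {t : Term} (h : SN t) : ∃ N, ∀ n, Chain t n → n ≤ N := by
  induction h with
  | intro t _ ih =>
      classical
      choose F hF using ih
      let f : Term → ℕ := fun t' => if h' : StepAll t t' then F t' h' else 0
      refine ⟨((reducts t).map f).sum + 1, ?_⟩
      intro n hn
      cases hn with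
      | zero => omega
      | succ hst hc =>
          rename_i t' m
          have h1 : f t' ≤ ((reducts t).map f).sum :=
            List.single_le_sum (by intros; exact Nat.zero_le _) _
              (List.mem_map_of_mem (f := f) (reducts_complete hst))
          have h2 : m ≤ f t' := by
            simp only [f, dif_pos hst]
            exact hF t' hst m hc
          omega

/-- If t[x:=u] is SN then t is SN and η(t) ≤ η(t[x:=u]). -/
theorem sn_of_subst (t u : Term) (k : ℕ) (h : SN (Term.subst t k u)) :
    SN t ∧ eta t ≤ eta (Term.subst t k u) := by
  have key : ∀ s, Acc (fun a b => StepAll b a) s → ∀ t, s = Term.subst t k u →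
      Acc (fun a b => StepAll b a) t := by
    intro s hs
    induction hs with
    | intro s _ ih =>
        rintro t rfl
        exact Acc.intro t fun t' ⟨r, h'⟩ => ih _ ⟨r, step_subst h' k u⟩ t' rfl
  refine ⟨key _ h t rfl, ?_⟩
  obtain ⟨N, hN⟩ := bound_of_sn h
  exact csSup_le_csSup ⟨N, fun n hn => hN n hn⟩ ⟨0, Chain.zero t⟩
    (fun n hn => chain_subst hn k u)
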